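/- The explicit matrix M(v) is the change-of-variables Jacobian dq/dw expressed in primitive variables: for every admissible primitive state v = (ρ, u₁, u₂, u₃, T) with ρ > 0 and T > 0, the 5×5 matrix identity M(v) · J_w(v) = J_q(v) holds, where J_w(v) and J_q(v) are the Jacobians (with respect to v) of the maps v ↦ w(v) and v ↦ q(v), respectively. In particular, for any differentiable field x ↦ v(x), M(v(x)) · d(w∘v)/dx = d(q∘v)/dx. -/

import Mathlib

open Matrix

noncomputable section

/-- Entropy variables `w(v)` for the perfect gas with `s = c_v log T - R log ρ`,
`h = c_p T`, `c_p = c_v + R`: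
`w = (h/T - s - |u|²/(2T), u₁/T, u₂/T, u₃/T, -1/T)`. -/
def entropyVars (R cv ρ u₁ u₂ u₃ T : ℝ) : Fin 5 → ℝ :=
  ![((cv + R) * T) / T - (cv * Real.log T - R * Real.log ρ)
      - (u₁ ^ 2 + u₂ ^ 2 + u₃ ^ 2) / (2 * T),
    u₁ / T, u₂ / T, u₃ / T, -(1 / T)]

/-- The symmetric 5×5 change-of-variables Jacobian `dq/dw` expressed in primitive
variables `v = (ρ, u₁, u₂, u₃, T)`, with gas constant `R` and heat capacity at
constant pressure `cp`. -/
def Mmat (R cp ρ u₁ u₂ u₃ T : ℝ) : Matrix (Fin 5) (Fin 5) ℝ :=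
  !![ρ / R, ρ * u₁ / R, ρ * u₂ / R, ρ * u₃ / R,
       ρ * (-2 * R * T + (u₁ ^ 2 + u₂ ^ 2 + u₃ ^ 2) + 2 * T * cp) / (2 * R);
     ρ * u₁ / R, ρ * (T + u₁ ^ 2 / R), ρ * u₁ * u₂ / R, ρ * u₁ * u₃ / R,
       ρ * u₁ * ((u₁ ^ 2 + u₂ ^ 2 + u₃ ^ 2) + 2 * T * cp) / (2 * R);
     ρ * u₂ / R, ρ * u₁ * u₂ / R, ρ * (T + u₂ ^ 2 / R), ρ * u₂ * u₃ / R,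
       ρ * u₂ * ((u₁ ^ 2 + u₂ ^ 2 + u₃ ^ 2) + 2 * T * cp) / (2 * R);
     ρ * u₃ / R, ρ * u₁ * u₃ / R, ρ * u₂ * u₃ / R, ρ * (T + u₃ ^ 2 / R),
       ρ * u₃ * ((u₁ ^ 2 + u₂ ^ 2 + u₃ ^ 2) + 2 * T * cp) / (2 * R);
     ρ * (-2 * R * T + (u₁ ^ 2 + u₂ ^ 2 + u₃ ^ 2) + 2 * T * cp) / (2 * R),
       ρ * u₁ * ((u₁ ^ 2 + u₂ ^ 2 + u₃ ^ 2) + 2 * T * cp) / (2 * R),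
       ρ * u₂ * ((u₁ ^ 2 + u₂ ^ 2 + u₃ ^ 2) + 2 * T * cp) / (2 * R),
       ρ * u₃ * ((u₁ ^ 2 + u₂ ^ 2 + u₃ ^ 2) + 2 * T * cp) / (2 * R),
       ρ * ((u₁ ^ 2 + u₂ ^ 2 + u₃ ^ 2) ^ 2
            + 4 * T * cp * (-(R * T) + (u₁ ^ 2 + u₂ ^ 2 + u₃ ^ 2) + T * cp)) / (4 * R)]

/-- Conservative variables `q(v) = (ρ, ρu₁, ρu₂, ρu₃, ρE)` with
`E = c_v T + |u|²/2`, as a map of the primitive state `v = (ρ, u₁, u₂, u₃, T)`. -/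
def consMap (cv : ℝ) (v : Fin 5 → ℝ) : Fin 5 → ℝ :=
  ![v 0, v 0 * v 1, v 0 * v 2, v 0 * v 3,
    v 0 * (cv * v 4 + ((v 1) ^ 2 + (v 2) ^ 2 + (v 3) ^ 2) / 2)]

/-- Entropy variables as a map of the primitive state `v = (ρ, u₁, u₂, u₃, T)`. -/
def entropyVarsMap (R cv : ℝ) (v : Fin 5 → ℝ) : Fin 5 → ℝ :=
  entropyVars R cv (v 0) (v 1) (v 2) (v 3) (v 4)

namespace MdqdwAux

/-- Projection onto the `i`-th coordinate as a continuous linear map. -/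
abbrev pr (i : Fin 5) : (Fin 5 → ℝ) →L[ℝ] ℝ := ContinuousLinearMap.proj i

/-- Explicit Jacobian of the entropy-variable map. -/
def Lw (R cv : ℝ) (v : Fin 5 → ℝ) : (Fin 5 → ℝ) →L[ℝ] (Fin 5 → ℝ) :=
  ContinuousLinearMap.pi
    ![(R / v 0) • pr 0 + (-(v 1 / v 4)) • pr 1 + (-(v 2 / v 4)) • pr 2
        + (-(v 3 / v 4)) • pr 3
        + (((v 1)^2 + (v 2)^2 + (v 3)^2) / (2 * (v 4)^2) - cv / v 4) • pr 4,
      (1 / v 4) • pr 1 + (-(v 1 / (v 4)^2)) • pr 4,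
      (1 / v 4) • pr 2 + (-(v 2 / (v 4)^2)) • pr 4,
      (1 / v 4) • pr 3 + (-(v 3 / (v 4)^2)) • pr 4,
      (1 / (v 4)^2) • pr 4]

/-- Explicit Jacobian of the conservative-variable map. -/
def Lq (cv : ℝ) (v : Fin 5 → ℝ) : (Fin 5 → ℝ) →L[ℝ] (Fin 5 → ℝ) :=
  ContinuousLinearMap.pi
    ![pr 0,
      (v 1) • pr 0 + (v 0) • pr 1,
      (v 2) • pr 0 + (v 0) • pr 2,
      (v 3) • pr 0 + (v 0) • pr 3,
      (cv * v 4 + ((v 1)^2 + (v 2)^2 + (v 3)^2)/2) • pr 0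
        + (v 0 * v 1) • pr 1 + (v 0 * v 2) • pr 2 + (v 0 * v 3) • pr 3
        + (v 0 * cv) • pr 4]

lemma hasFDerivAt_w (R cv : ℝ) (v : Fin 5 → ℝ) (hρ : v 0 ≠ 0) (hT : v 4 ≠ 0) :
    HasFDerivAt (entropyVarsMap R cv) (Lw R cv v) v := by
  have h2T : (2 : ℝ) * v 4 ≠ 0 := by simp [hT]
  have hp : ∀ i : Fin 5, HasFDerivAt (fun w : Fin 5 → ℝ => w i) (pr i) v :=
    fun i => (pr i).hasFDerivAt
  have hlogT : HasFDerivAt (fun w : Fin 5 → ℝ => Real.log (w 4)) ((v 4)⁻¹ • pr 4) v :=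
    by have := (Real.hasDerivAt_log hT).comp_hasFDerivAt v (hp 4); exact this
  have hlogR : HasFDerivAt (fun w : Fin 5 → ℝ => Real.log (w 0)) ((v 0)⁻¹ • pr 0) v :=
    by have := (Real.hasDerivAt_log hρ).comp_hasFDerivAt v (hp 0); exact this
  have hinvT : HasFDerivAt (fun w : Fin 5 → ℝ => (w 4)⁻¹) ((-(v 4 ^ 2)⁻¹) • pr 4) v :=
    (hasDerivAt_inv hT).comp_hasFDerivAt v (hp 4)
  have hinv2T : HasFDerivAt (fun w : Fin 5 → ℝ => (2 * w 4)⁻¹)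
      ((-((2 * v 4) ^ 2)⁻¹) • ((2:ℝ) • pr 4)) v :=
    (hasDerivAt_inv h2T).comp_hasFDerivAt v ((hp 4).const_mul 2)
  have hsq : ∀ i : Fin 5, HasFDerivAt (fun w : Fin 5 → ℝ => (w i) ^ 2)
      ((2 * v i) • pr i) v := by
    intro i
    have h := (hasDerivAt_pow 2 (v i)).comp_hasFDerivAt v (hp i)
    norm_num at h
    exact h
  have c0 : HasFDerivAt (fun x : Fin 5 → ℝ => entropyVarsMap R cv x 0)
      ((pr 0).comp (Lw R cv v)) v := by
    simp only [entropyVarsMap, entropyVars, Lw, ContinuousLinearMap.proj_pi,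
      Matrix.cons_val_zero, div_eq_mul_inv, one_mul]
    have h := ((((hp 4).const_mul (cv + R)).mul hinvT).sub
        ((hlogT.const_mul cv).sub (hlogR.const_mul R))).sub
        ((((hsq 1).add (hsq 2)).add (hsq 3)).mul hinv2T)
    refine h.congr_fderiv ?_
    refine ContinuousLinearMap.ext fun d => ?_
    simp only [ContinuousLinearMap.add_apply, ContinuousLinearMap.sub_apply,
      ContinuousLinearMap.neg_apply, ContinuousLinearMap.smul_apply,
      ContinuousLinearMap.proj_apply, smul_eq_mul, Pi.add_apply]
    field_simp
    ring
  have c1 : HasFDerivAt (fun x : Fin 5 → ℝ => entropyVarsMap R cv x 1)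
      ((pr 1).comp (Lw R cv v)) v := by
    simp only [entropyVarsMap, entropyVars, Lw, ContinuousLinearMap.proj_pi,
      Matrix.cons_val_one, Matrix.head_cons, div_eq_mul_inv, Matrix.cons_val_zero]
    have h := (hp 1).mul hinvT
    refine h.congr_fderiv ?_
    refine ContinuousLinearMap.ext fun d => ?_
    simp only [ContinuousLinearMap.add_apply, ContinuousLinearMap.smul_apply,
      ContinuousLinearMap.proj_apply, smul_eq_mul]
    field_simp
    ring
  have c2 : HasFDerivAt (fun x : Fin 5 → ℝ => entropyVarsMap R cv x 2)
      ((pr 2).comp (Lw R cv v)) v := by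
    simp only [entropyVarsMap, entropyVars, Lw, ContinuousLinearMap.proj_pi,
      Matrix.cons_val_two, Matrix.tail_cons, Matrix.head_cons, div_eq_mul_inv]
    have h := (hp 2).mul hinvT
    refine h.congr_fderiv ?_
    refine ContinuousLinearMap.ext fun d => ?_
    simp only [ContinuousLinearMap.add_apply, ContinuousLinearMap.smul_apply,
      ContinuousLinearMap.proj_apply, smul_eq_mul]
    field_simp
    ring
  have c3 : HasFDerivAt (fun x : Fin 5 → ℝ => entropyVarsMap R cv x 3)
      ((pr 3).comp (Lw R cv v)) v := by
    simp only [entropyVarsMap, entropyVars, Lw, ContinuousLinearMap.proj_pi,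
      Matrix.cons_val_three, Matrix.tail_cons, Matrix.head_cons, div_eq_mul_inv]
    have h := (hp 3).mul hinvT
    refine h.congr_fderiv ?_
    refine ContinuousLinearMap.ext fun d => ?_
    simp only [ContinuousLinearMap.add_apply, ContinuousLinearMap.smul_apply,
      ContinuousLinearMap.proj_apply, smul_eq_mul]
    field_simp
    ring
  have c4 : HasFDerivAt (fun x : Fin 5 → ℝ => entropyVarsMap R cv x 4)
      ((pr 4).comp (Lw R cv v)) v := by
    simp only [entropyVarsMap, entropyVars, Lw, ContinuousLinearMap.proj_pi,
      Matrix.cons_val_four, Matrix.tail_cons, Matrix.head_cons, div_eq_mul_inv, one_mul]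
    have h := hinvT.neg
    refine h.congr_fderiv ?_
    refine ContinuousLinearMap.ext fun d => ?_
    simp only [ContinuousLinearMap.neg_apply, ContinuousLinearMap.smul_apply,
      ContinuousLinearMap.proj_apply, smul_eq_mul]
    field_simp
  apply hasFDerivAt_pi''
  intro i
  fin_cases i
  · exact c0
  · exact c1
  · exact c2
  · exact c3
  · exact c4

lemma hasFDerivAt_q (cv : ℝ) (v : Fin 5 → ℝ) :
    HasFDerivAt (consMap cv) (Lq cv v) v := by
  have hp : ∀ i : Fin 5, HasFDerivAt (fun w : Fin 5 → ℝ => w i) (pr i) v :=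
    fun i => (pr i).hasFDerivAt
  have hsq : ∀ i : Fin 5, HasFDerivAt (fun w : Fin 5 → ℝ => (w i) ^ 2)
      ((2 * v i) • pr i) v := by
    intro i
    have h := (hasDerivAt_pow 2 (v i)).comp_hasFDerivAt v (hp i)
    norm_num at h
    exact h
  have c0 : HasFDerivAt (fun x : Fin 5 → ℝ => consMap cv x 0)
      ((pr 0).comp (Lq cv v)) v := by
    simp only [consMap, Lq, ContinuousLinearMap.proj_pi, Matrix.cons_val_zero]
    exact hp 0
  have c1 : HasFDerivAt (fun x : Fin 5 → ℝ => consMap cv x 1)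
      ((pr 1).comp (Lq cv v)) v := by
    simp only [consMap, Lq, ContinuousLinearMap.proj_pi, Matrix.cons_val_one,
      Matrix.head_cons, Matrix.cons_val_zero]
    have h := (hp 0).mul (hp 1)
    refine h.congr_fderiv ?_
    refine ContinuousLinearMap.ext fun d => ?_
    simp only [ContinuousLinearMap.add_apply, ContinuousLinearMap.smul_apply,
      ContinuousLinearMap.proj_apply, smul_eq_mul]
    ring
  have c2 : HasFDerivAt (fun x : Fin 5 → ℝ => consMap cv x 2)
      ((pr 2).comp (Lq cv v)) v := by
    simp only [consMap, Lq, ContinuousLinearMap.proj_pi, Matrix.cons_val_two,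
      Matrix.tail_cons, Matrix.head_cons]
    have h := (hp 0).mul (hp 2)
    refine h.congr_fderiv ?_
    refine ContinuousLinearMap.ext fun d => ?_
    simp only [ContinuousLinearMap.add_apply, ContinuousLinearMap.smul_apply,
      ContinuousLinearMap.proj_apply, smul_eq_mul]
    ring
  have c3 : HasFDerivAt (fun x : Fin 5 → ℝ => consMap cv x 3)
      ((pr 3).comp (Lq cv v)) v := by
    simp only [consMap, Lq, ContinuousLinearMap.proj_pi, Matrix.cons_val_three,
      Matrix.tail_cons, Matrix.head_cons]
    have h := (hp 0).mul (hp 3)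
    refine h.congr_fderiv ?_
    refine ContinuousLinearMap.ext fun d => ?_
    simp only [ContinuousLinearMap.add_apply, ContinuousLinearMap.smul_apply,
      ContinuousLinearMap.proj_apply, smul_eq_mul]
    ring
  have c4 : HasFDerivAt (fun x : Fin 5 → ℝ => consMap cv x 4)
      ((pr 4).comp (Lq cv v)) v := by
    simp only [consMap, Lq, ContinuousLinearMap.proj_pi, Matrix.cons_val_four,
      Matrix.tail_cons, Matrix.head_cons, div_eq_mul_inv]
    have h := (hp 0).mul (((hp 4).const_mul cv).add
      ((((hsq 1).add (hsq 2)).add (hsq 3)).mul_const ((2:ℝ)⁻¹)))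
    refine h.congr_fderiv ?_
    refine ContinuousLinearMap.ext fun d => ?_
    simp only [ContinuousLinearMap.add_apply, ContinuousLinearMap.smul_apply,
      ContinuousLinearMap.proj_apply, smul_eq_mul, Pi.add_apply]
    ring
  apply hasFDerivAt_pi''
  intro i
  fin_cases i
  · exact c0
  · exact c1
  · exact c2
  · exact c3
  · exact c4

lemma Lw_apply (R cv : ℝ) (v d : Fin 5 → ℝ) :
    Lw R cv v d =
      ![(R / v 0) * d 0 + (-(v 1 / v 4)) * d 1 + (-(v 2 / v 4)) * d 2
          + (-(v 3 / v 4)) * d 3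
          + (((v 1)^2 + (v 2)^2 + (v 3)^2) / (2 * (v 4)^2) - cv / v 4) * d 4,
        (1 / v 4) * d 1 + (-(v 1 / (v 4)^2)) * d 4,
        (1 / v 4) * d 2 + (-(v 2 / (v 4)^2)) * d 4,
        (1 / v 4) * d 3 + (-(v 3 / (v 4)^2)) * d 4,
        (1 / (v 4)^2) * d 4] := by
  funext k
  fin_cases k <;>
    simp [Lw, ContinuousLinearMap.pi_apply]

lemma Lq_apply (cv : ℝ) (v d : Fin 5 → ℝ) :
    Lq cv v d =
      ![d 0, v 1 * d 0 + v 0 * d 1, v 2 * d 0 + v 0 * d 2, v 3 * d 0 + v 0 * d 3,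
        (cv * v 4 + ((v 1)^2 + (v 2)^2 + (v 3)^2)/2) * d 0
          + v 0 * v 1 * d 1 + v 0 * v 2 * d 2 + v 0 * v 3 * d 3 + v 0 * cv * d 4] := by
  funext k
  fin_cases k <;>
    simp [Lq, ContinuousLinearMap.pi_apply, mul_assoc]

set_option maxHeartbeats 2000000 in
lemma key (R cv : ℝ) (hR : R ≠ 0) (v : Fin 5 → ℝ) (hρ : v 0 ≠ 0) (hT : v 4 ≠ 0)
    (d : Fin 5 → ℝ) :
    Mmat R (cv + R) (v 0) (v 1) (v 2) (v 3) (v 4) *ᵥ (Lw R cv v d) = Lq cv v d := by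
  rw [Lw_apply, Lq_apply]
  funext j
  fin_cases j <;>
  · simp [Mmat, Matrix.mulVec, dotProduct, Fin.sum_univ_five]
    field_simp
    ring

end MdqdwAux

open MdqdwAux in
/-- the explicit matrix `M(v)` is the change-of-variables Jacobian
`dq/dw` expressed in primitive variables: for every admissible state `v`
(`ρ > 0`, `T > 0`), `M(v) · J_w(v) = J_q(v)` (stated as an identity of linear
maps applied to an arbitrary direction `d`); in particular, for any
differentiable field `x ↦ v(x)`, `M(v(x)) · d(w∘v)/dx = d(q∘v)/dx`. -/
theorem Mmat_is_dqdw
    (R cv : ℝ) (hR : 0 < R) (hcv : 0 < cv) :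
    (∀ v : Fin 5 → ℝ, 0 < v 0 → 0 < v 4 →
      ∀ d : Fin 5 → ℝ,
        Mmat R (cv + R) (v 0) (v 1) (v 2) (v 3) (v 4) *ᵥ
            fderiv ℝ (entropyVarsMap R cv) v d
          = fderiv ℝ (consMap cv) v d) ∧
    (∀ (vf : ℝ → Fin 5 → ℝ) (x : ℝ), DifferentiableAt ℝ vf x →
      0 < vf x 0 → 0 < vf x 4 →
        Mmat R (cv + R) (vf x 0) (vf x 1) (vf x 2) (vf x 3) (vf x 4) *ᵥ
            deriv (fun y => entropyVarsMap R cv (vf y)) x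
          = deriv (fun y => consMap cv (vf y)) x) := by
  constructor
  · intro v h0 h4 d
    rw [(hasFDerivAt_w R cv v h0.ne' h4.ne').fderiv, (hasFDerivAt_q cv v).fderiv]
    exact key R cv hR.ne' v h0.ne' h4.ne' d
  · intro vf x hvf h0 h4
    have hw := (hasFDerivAt_w R cv (vf x) h0.ne' h4.ne').comp_hasDerivAt x hvf.hasDerivAt
    have hq := (hasFDerivAt_q cv (vf x)).comp_hasDerivAt x hvf.hasDerivAt
    have ew : (fun y => entropyVarsMap R cv (vf y)) = entropyVarsMap R cv ∘ vf := rfl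
    have eq' : (fun y => consMap cv (vf y)) = consMap cv ∘ vf := rfl
    rw [ew, eq', hw.deriv, hq.deriv]
    exact key R cv hR.ne' (vf x) h0.ne' h4.ne' (deriv vf x)
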